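/- Let m ≥ 1, let p : Fin (m+1) → ℝ^m be affinely independent (hence it forms an affine basis of ℝ^m), and let b denote the associated affine basis with barycentric coordinate functions b.coord j. For every x in the convex hull of {p_0, …, p_m} and every j, the j-th barycentric coordinate equals the ratio of sub-simplex volume to simplex volume: (b.coord j) x · A(p) = A(Function.update p j x). -/

import Mathlib

open MeasureTheory
open Pointwise

/-- The `m`-dimensional volume of the convex hull of the range of a family of points
in `ℝ^m` (the "area" `A(p)` of the simplex with vertices `p`). -/
noncomputable def simVol {m : ℕ} (p : Fin (m + 1) → EuclideanSpace ℝ (Fin m)) : ℝ :=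
  (volume (convexHull ℝ (Set.range p))).toReal

/-- The volume-ratio weights of Eqs. (15)-(16) are exactly barycentric coordinates:
for an affine basis `b` of `ℝ^m` with points `p` and any `x` in the convex hull of the
basis points, the `j`-th barycentric coordinate of `x` times the simplex volume equals
the volume of the sub-simplex obtained by replacing `p j` with `x`. -/
theorem barycentric_coord_eq_volume_ratio {m : ℕ} (hm : 1 ≤ m)
    (p : Fin (m + 1) → EuclideanSpace ℝ (Fin m)) (hp : AffineIndependent ℝ p)
    (b : AffineBasis (Fin (m + 1)) ℝ (EuclideanSpace ℝ (Fin m))) (hb : ⇑b = p)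
    (x : EuclideanSpace ℝ (Fin m)) (hx : x ∈ convexHull ℝ (Set.range p))
    (j : Fin (m + 1)) :
    b.coord j x * simVol p = simVol (Function.update p j x) := by
    classical
  set q := Function.update p j x with hq
  have : Nontrivial (Fin (m+1)) := Fin.nontrivial_iff_two_le.mpr (by omega)
  obtain ⟨k, hk⟩ := exists_ne j
  set B := b.basisOf k with hB
  set L : EuclideanSpace ℝ (Fin m) →ₗ[ℝ] EuclideanSpace ℝ (Fin m) :=
    B.constr ℝ (fun i => q ↑i - p k) with hL
  have hBapp : ∀ i : {i : Fin (m+1) // i ≠ k}, B i = p ↑i - p k := by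
    intro i; rw [hB, AffineBasis.basisOf_apply, hb, vsub_eq_sub]
  set w : Fin (m+1) → ℝ := fun i => b.coord i x with hw
  have hw1 : ∑ i, w i = 1 := b.sum_coord_apply_eq_one x
  -- x - p k as combination of the basis B
  have hxcomb : x - p k = ∑ i : {i : Fin (m+1) // i ≠ k}, w ↑i • B i := by
    have h1 : Finset.univ.affineCombination ℝ b w = x := b.affineCombination_coord_eq_self x
    rw [Finset.affineCombination_eq_weightedVSubOfPoint_vadd_of_sum_eq_one _ _ _ hw1 (b k)] at h1
    have h2 : x - p k = ∑ i, w i • (p i - p k) := by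
      rw [← h1, Finset.weightedVSubOfPoint_apply]
      simp [hb, vsub_eq_sub, vadd_eq_add]
    rw [h2]
    have h3 : ∑ i : {i : Fin (m+1) // i ≠ k}, w ↑i • B i
        = ∑ i ∈ Finset.univ.erase k, w i • (p i - p k) := by
      rw [Finset.sum_subtype (Finset.univ.erase k) (fun i => by simp [Finset.mem_erase] : ∀ i, i ∈ Finset.univ.erase k ↔ i ≠ k)]
      exact Finset.sum_congr rfl fun i _ => by rw [hBapp]
    rw [h3, ← Finset.sum_erase (Finset.univ) (a := k) (by simp)]
  have hLB : ∀ i : {i : Fin (m+1) // i ≠ k}, L (B i) = q ↑i - p k :=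
    fun i => B.constr_basis ℝ _ i
  -- determinant of L is w j
  have hdet : LinearMap.det L = w j := by
    rw [← LinearMap.det_toMatrix B L]
    have hM : LinearMap.toMatrix B B L
        = (1 : Matrix {i : Fin (m+1) // i ≠ k} {i : Fin (m+1) // i ≠ k} ℝ).updateCol ⟨j, hk.symm⟩ (fun i => w ↑i) := by
      ext r c
      rw [LinearMap.toMatrix_apply, hLB]
      by_cases hc : c = ⟨j, hk.symm⟩
      · subst hc
        have : q j - p k = ∑ i : {i : Fin (m+1) // i ≠ k}, w ↑i • B i := by
          rw [hq, Function.update_self]; exact hxcomb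
        rw [Matrix.updateCol_self]
        simp only [this, map_sum, _root_.map_smul, Finsupp.coe_finset_sum, Finset.sum_apply]
        simp [Module.Basis.repr_self, Finsupp.single_apply]
      · have hcj : (c : Fin (m+1)) ≠ j := fun h => hc (Subtype.ext h)
        rw [Matrix.updateCol_ne hc, hq, Function.update_of_ne hcj, ← hBapp]
        simp [Module.Basis.repr_self, Finsupp.single_apply, Matrix.one_apply, eq_comm]
    rw [hM]
    have h2 : Matrix.cramer (1 : Matrix {i : Fin (m+1) // i ≠ k} {i : Fin (m+1) // i ≠ k} ℝ)
        (fun i => w ↑i) ⟨j, hk.symm⟩ = w j := by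
      rw [Matrix.cramer_one]; rfl
    rw [← h2, Matrix.cramer_apply]
  -- the affine map g
  set g : EuclideanSpace ℝ (Fin m) →ᵃ[ℝ] EuclideanSpace ℝ (Fin m) :=
    ((AffineEquiv.vaddConst ℝ (p k)).toAffineMap.comp L.toAffineMap).comp
      (AffineEquiv.vaddConst ℝ (p k)).symm.toAffineMap with hg
  have hgapp : ∀ y, g y = L (y - p k) + p k := fun y => rfl
  have hgp : ∀ i, g (p i) = q i := by
    intro i
    by_cases hik : i = k
    · subst hik; rw [hgapp]; simp [hq, Function.update_of_ne hk]
    · rw [hgapp, ← hBapp ⟨i, hik⟩, hLB]; abel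
  -- image of the hull
  have himg : g '' (convexHull ℝ (Set.range p)) = convexHull ℝ (Set.range q) := by
    rw [AffineMap.image_convexHull, ← Set.range_comp, show ⇑g ∘ p = q from funext hgp]
  set s := convexHull ℝ (Set.range p) with hs
  have hnn : 0 ≤ w j := by
    have hx' : x ∈ convexHull ℝ (Set.range ⇑b) := by rw [hb]; exact hx
    rw [b.convexHull_eq_nonneg_coord] at hx'
    exact hx' j
  have hμ : volume (convexHull ℝ (Set.range q))
      = ENNReal.ofReal |LinearMap.det L| * volume s := by
    rw [← himg]
    have e1 : g '' s = (fun v => v + p k) '' (L '' ((fun y => y - p k) '' s)) := by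
      rw [Set.image_image, Set.image_image]
      exact Set.image_congr fun y _ => hgapp y
    have e2 : (fun v => v + p k) '' (L '' ((fun y => y - p k) '' s))
        = p k +ᵥ (L '' ((fun y => y - p k) '' s)) := by
      rw [← Set.image_vadd]; simp [add_comm]
    have e3 : (fun y => y - p k) '' s = (-(p k)) +ᵥ s := by
      rw [← Set.image_vadd]; simp [sub_eq_neg_add]
    rw [e1, e2, measure_vadd, e3, Measure.addHaar_image_linearMap, measure_vadd]
  have hfin : volume s ≠ ⊤ :=
    (((Set.finite_range p).isCompact_convexHull ℝ).measure_lt_top).ne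
  have habs : |LinearMap.det L| = w j := by rw [hdet, abs_of_nonneg hnn]
  show w j * simVol p = simVol q
  simp only [simVol]
  rw [hμ, ENNReal.toReal_mul, ENNReal.toReal_ofReal (abs_nonneg _), habs]
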